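/- Let V be the group with presentation ⟨a, b, u₀, u₁, u₂ | a⁴ = b² = 1, b^{-1}ab = a^{-1}, a^{-1}u₀a = u₂, a^{-1}u₁a = (u₀u₁u₂)^{-1}, a^{-1}u₂a = u₀, b^{-1}u₀b = u₀^{-1}, b^{-1}u₁b = u₀u₁u₂, b^{-1}u₂b = u₂^{-1}⟩. Then V/V' ≅ C₂ × C₂ × C₂ × C₂. -/

import Mathlib

/-- Generators `a, b, u₀, u₁, u₂` (as `0, 1, 2, 3, 4 : Fin 5`) and the relators of the
presentation of `V(ℤD₈)`:
`a⁴ = b² = 1`, `b⁻¹ab = a⁻¹`, `u₀^a = u₂`, `u₁^a = (u₀u₁u₂)⁻¹`, `u₂^a = u₀`,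
`u₀^b = u₀⁻¹`, `u₁^b = u₀u₁u₂`, `u₂^b = u₂⁻¹`. -/
def relsD8 : Set (FreeGroup (Fin 5)) :=
  letI a := FreeGroup.of (0 : Fin 5)
  letI b := FreeGroup.of (1 : Fin 5)
  letI u₀ := FreeGroup.of (2 : Fin 5)
  letI u₁ := FreeGroup.of (3 : Fin 5)
  letI u₂ := FreeGroup.of (4 : Fin 5)
  {a ^ 4, b ^ 2, b⁻¹ * a * b * a,
   a⁻¹ * u₀ * a * u₂⁻¹, a⁻¹ * u₁ * a * (u₀ * u₁ * u₂), a⁻¹ * u₂ * a * u₀⁻¹,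
   b⁻¹ * u₀ * b * u₀, b⁻¹ * u₁ * b * (u₀ * u₁ * u₂)⁻¹, b⁻¹ * u₂ * b * u₂}

namespace VZD8

abbrev P := ZMod 2 × ZMod 2 × ZMod 2 × ZMod 2
abbrev T := Multiplicative P
abbrev A := Abelianization (PresentedGroup relsD8)

def tgt : Fin 5 → T
  | 0 => Multiplicative.ofAdd (1, 0, 0, 0)
  | 1 => Multiplicative.ofAdd (0, 1, 0, 0)
  | 2 => Multiplicative.ofAdd (0, 0, 1, 0)
  | 3 => Multiplicative.ofAdd (0, 0, 0, 1)
  | 4 => Multiplicative.ofAdd (0, 0, 1, 0)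

lemma rels_map : ∀ r ∈ relsD8, FreeGroup.lift tgt r = 1 := by
  intro r hr
  simp only [relsD8, Set.mem_insert_iff, Set.mem_singleton_iff] at hr
  rcases hr with rfl | rfl | rfl | rfl | rfl | rfl | rfl | rfl | rfl <;>
    simp only [map_mul, map_inv, map_pow, FreeGroup.lift_apply_of] <;> decide

/-- The homomorphism `A →* T`. -/
def Φ : A →* T := Abelianization.lift (PresentedGroup.toGroup rels_map)

/-- image of the `i`-th generator in the abelianization -/
def X (i : Fin 5) : A := Abelianization.of (PresentedGroup.of i)

lemma Φ_X (i : Fin 5) : Φ (X i) = tgt i := by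
  simp [Φ, X, Abelianization.lift_apply_of, PresentedGroup.toGroup.of]

def ρ : FreeGroup (Fin 5) →* A := Abelianization.of.comp (PresentedGroup.mk relsD8)

lemma ρ_rel {r : FreeGroup (Fin 5)} (hr : r ∈ relsD8) : ρ r = 1 := by
  have : PresentedGroup.mk relsD8 r = 1 :=
    (QuotientGroup.eq_one_iff _).mpr (Subgroup.subset_normalClosure hr)
  simp [ρ, this]

lemma ρ_of (i : Fin 5) : ρ (FreeGroup.of i) = X i := rfl

lemma hX0 : X 0 * X 0 = 1 := by
  have h := ρ_rel (r := (FreeGroup.of 1)⁻¹ * FreeGroup.of 0 * FreeGroup.of 1 * FreeGroup.of 0)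
    (by simp [relsD8])
  simp only [map_mul, map_inv, ρ_of] at h
  rwa [inv_mul_cancel_comm] at h

lemma hX1 : X 1 * X 1 = 1 := by
  have h := ρ_rel (r := (FreeGroup.of 1) ^ 2) (by simp [relsD8])
  simpa [map_pow, ρ_of, sq] using h

lemma hX2 : X 2 * X 2 = 1 := by
  have h := ρ_rel (r := (FreeGroup.of 1)⁻¹ * FreeGroup.of 2 * FreeGroup.of 1 * FreeGroup.of 2)
    (by simp [relsD8])
  simp only [map_mul, map_inv, ρ_of] at h
  rwa [inv_mul_cancel_comm] at h

lemma hX4 : X 4 * X 4 = 1 := by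
  have h := ρ_rel (r := (FreeGroup.of 1)⁻¹ * FreeGroup.of 4 * FreeGroup.of 1 * FreeGroup.of 4)
    (by simp [relsD8])
  simp only [map_mul, map_inv, ρ_of] at h
  rwa [inv_mul_cancel_comm] at h

lemma hX24 : X 2 = X 4 := by
  have h := ρ_rel (r := (FreeGroup.of 0)⁻¹ * FreeGroup.of 2 * FreeGroup.of 0 * (FreeGroup.of 4)⁻¹)
    (by simp [relsD8])
  simp only [map_mul, map_inv, ρ_of] at h
  rw [inv_mul_cancel_comm] at h
  exact mul_inv_eq_one.mp h

lemma hX3 : X 3 * X 3 = 1 := by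
  have h := ρ_rel (r := (FreeGroup.of 0)⁻¹ * FreeGroup.of 3 * FreeGroup.of 0 *
      (FreeGroup.of 2 * FreeGroup.of 3 * FreeGroup.of 4)) (by simp [relsD8])
  simp only [map_mul, map_inv, ρ_of] at h
  rw [inv_mul_cancel_comm, hX24] at h
  have e : X 3 * (X 4 * X 3 * X 4) = X 3 * X 3 * (X 4 * X 4) := by
    simp [mul_comm, mul_left_comm, mul_assoc]
  rw [e, hX4, mul_one] at h
  exact h

/-- hom `ZMod 2 →+ Additive A` sending `1` to an element of square one. -/
def l2 (x : A) (hx : x * x = 1) : ZMod 2 →+ Additive A :=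
  ZMod.lift 2 ⟨zmultiplesHom (Additive A) (Additive.ofMul x), by
    simp [zmultiplesHom_apply, two_zsmul, ← ofMul_mul, hx]⟩

lemma l2_one (x : A) (hx : x * x = 1) : l2 x hx (1 : ZMod 2) = Additive.ofMul x := by
  have h1 : ((1 : ℤ) : ZMod 2) = 1 := by norm_num
  unfold l2
  rw [← h1, ZMod.lift_coe]
  simp [zmultiplesHom_apply]

def gAdd : P →+ Additive A :=
  (l2 (X 0) hX0).comp (AddMonoidHom.fst _ _) +
  ((l2 (X 1) hX1).comp ((AddMonoidHom.fst _ _).comp (AddMonoidHom.snd _ _))) +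
  ((l2 (X 2) hX2).comp ((AddMonoidHom.fst _ _).comp
    ((AddMonoidHom.snd _ _).comp (AddMonoidHom.snd _ _)))) +
  ((l2 (X 3) hX3).comp ((AddMonoidHom.snd _ _).comp
    ((AddMonoidHom.snd _ _).comp (AddMonoidHom.snd _ _))))

def g : T →* A := AddMonoidHom.toMultiplicativeLeft gAdd

lemma g_tgt (i : Fin 5) : g (tgt i) = X i := by
  fin_cases i <;>
    simp [g, gAdd, tgt, AddMonoidHom.coe_toMultiplicativeLeft, l2_one, hX24]

lemma left_inv : g.comp Φ = MonoidHom.id A := by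
  apply Abelianization.hom_ext
  apply PresentedGroup.ext
  intro i
  show g (Φ (X i)) = X i
  rw [Φ_X, g_tgt]

lemma Φ_surj : Function.Surjective Φ := by
  intro x
  obtain ⟨c, rfl⟩ : ∃ c : P, Multiplicative.ofAdd c = x := ⟨x.toAdd, rfl⟩
  obtain ⟨c1, c2, c3, c4⟩ := c
  refine ⟨X 0 ^ c1.val * X 1 ^ c2.val * X 2 ^ c3.val * X 3 ^ c4.val, ?_⟩
  rw [map_mul, map_mul, map_mul, map_pow, map_pow, map_pow, map_pow,
    Φ_X, Φ_X, Φ_X, Φ_X]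
  show Multiplicative.ofAdd (c1.val • ((1 : ZMod 2), (0 : ZMod 2), (0 : ZMod 2), (0 : ZMod 2))
      + c2.val • (0, 1, 0, 0) + c3.val • (0, 0, 1, 0) + c4.val • (0, 0, 0, 1)) = _
  congr 1
  simp only [Prod.smul_mk, Prod.mk_add_mk, smul_zero, add_zero, zero_add, nsmul_eq_mul, mul_one]
  exact Prod.ext (ZMod.natCast_rightInverse c1) (Prod.ext (ZMod.natCast_rightInverse c2)
    (Prod.ext (ZMod.natCast_rightInverse c3) (ZMod.natCast_rightInverse c4)))

end VZD8

/-- for the group `V = V(ℤD₈)` with the presentation above,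
`V/V' ≅ C₂ × C₂ × C₂ × C₂`. -/
theorem abelianization_VZD8 :
    Nonempty (Abelianization (PresentedGroup relsD8) ≃*
      Multiplicative (ZMod 2 × ZMod 2 × ZMod 2 × ZMod 2)) := by
  refine ⟨MulEquiv.ofBijective VZD8.Φ ⟨?_, VZD8.Φ_surj⟩⟩
  exact Function.LeftInverse.injective (g := VZD8.g)
    fun y => DFunLike.congr_fun VZD8.left_inv y
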